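/- arXiv:2112.05065 — 2 statements merged into one kernel-verified Lean document; each statement's English description precedes it below -/
import Mathlib

section
/- Let U ⊆ Sym(Ω). There exists a perfect refiner for U (with respect to O) if and only if U = Iso(S,T) for some S, T ∈ Stacks(O). In particular, there exists a perfect refiner for a subgroup G of Sym(Ω) if and only if G = Auto(S) for some S ∈ Stacks(O). -/
/-- A right action of a group `G` on a type `O`, written exponentially in the paper:
`act o g` is `o ^ g`. -/
structure RAct (G : Type*) [Group G] (O : Type*) where
  act : O → G → O
  act_one : ∀ o : O, act o 1 = o
  act_mul : ∀ (o : O) (g h : G), act o (g * h) = act (act o g) h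

namespace RAct

variable {G : Type*} [Group G] {O : Type*}

/-- The induced entrywise right action on stacks (finite lists) with entries in `O`. -/
def stack (a : RAct G O) : RAct G (List O) where
  act S g := S.map fun o => a.act o g
  act_one S := by
    have h : (fun o => a.act o 1) = id := funext fun o => a.act_one o
    simp [h]
  act_mul S g h := by
    rw [List.map_map]
    refine List.map_congr_left fun o _ => ?_
    exact a.act_mul o g h

/-- The transporter set `Iso(x, y) = {g : x ^ g = y}`. -/
def iso {X : Type*} (b : RAct G X) (x y : X) : Set G := {g | b.act x g = y}

/-- A refiner for `U`: a pair of functions on stacks with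
`U ∩ Iso(S, T) ⊆ Iso(f_L S, f_R T)` for all stacks `S`, `T`. -/
def IsRefiner (a : RAct G O) (U : Set G) (fL fR : List O → List O) : Prop :=
  ∀ S T : List O, U ∩ a.stack.iso S T ⊆ a.stack.iso (fL S) (fR T)

/-- A perfect refiner for `U`: a refiner such that
`U ∩ Iso(S, T) = Iso(S ‖ f_L S, T ‖ f_R T)` whenever `|S| = |T|`. -/
def IsPerfectRefiner (a : RAct G O) (U : Set G) (fL fR : List O → List O) : Prop :=
  IsRefiner a U fL fR ∧
    ∀ S T : List O, S.length = T.length →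
      U ∩ a.stack.iso S T = a.stack.iso (S ++ fL S) (T ++ fR T)

/-- The action of `x ∈ G` on functions on stacks: `f ^ x (S) = (f (S ^ x⁻¹)) ^ x`. -/
def conj (a : RAct G O) (f : List O → List O) (x : G) : List O → List O :=
  fun S => a.stack.act (f (a.stack.act S x⁻¹)) x

/-- The combination `f ‖ g` of two functions on stacks: `(f ‖ g)(S) = f S ‖ g S`. -/
def comb (f g : List O → List O) : List O → List O := fun S => f S ++ g S

end RAct

/-- There exists a perfect refiner for `U ⊆ Sym Ω` if and only if `U = Iso(S, T)` for some
stacks `S, T`; in particular, a subgroup `G ≤ Sym Ω` has a perfect refiner if and only if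
`G = Auto(S)` for some stack `S`. -/
theorem stmt7 {Ω : Type*} [Fintype Ω] [Nonempty Ω] {O : Type*}
    (a : RAct (Equiv.Perm Ω) O) :
    (∀ U : Set (Equiv.Perm Ω),
      (∃ fL fR : List O → List O, a.IsPerfectRefiner U fL fR) ↔
        ∃ S T : List O, U = a.stack.iso S T) ∧
    (∀ G : Subgroup (Equiv.Perm Ω),
      (∃ fL fR : List O → List O, a.IsPerfectRefiner (G : Set (Equiv.Perm Ω)) fL fR) ↔
        ∃ S : List O, (G : Set (Equiv.Perm Ω)) = a.stack.iso S S) := by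
  have main : ∀ U : Set (Equiv.Perm Ω),
      (∃ fL fR : List O → List O, a.IsPerfectRefiner U fL fR) ↔
        ∃ S T : List O, U = a.stack.iso S T := by
    intro U
    constructor
    · rintro ⟨fL, fR, _, hp⟩
      refine ⟨fL [], fR [], ?_⟩
      have h := hp [] [] rfl
      have h2 : a.stack.iso ([] : List O) [] = Set.univ := by
        ext g; simp [RAct.stack, RAct.iso]
      rw [h2, Set.inter_univ] at h
      simpa using h
    · rintro ⟨S₀, T₀, rfl⟩
      have happ : ∀ (S S' : List O) (g : Equiv.Perm Ω),
          a.stack.act (S ++ S') g = a.stack.act S g ++ a.stack.act S' g := by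
        intro S S' g; simp [RAct.stack]
      refine ⟨fun _ => S₀, fun _ => T₀, fun S T g hg => hg.1, fun S T hlen => ?_⟩
      ext g
      constructor
      · rintro ⟨hg1, hg2⟩
        show a.stack.act (S ++ S₀) g = T ++ T₀
        rw [happ, hg1, hg2]
      · intro hg
        have h : a.stack.act S g ++ a.stack.act S₀ g = T ++ T₀ := by
          rw [← happ]; exact hg
        have hl : (a.stack.act S g).length = T.length := by
          simp [RAct.stack, hlen]
        have := List.append_inj h hl
        exact ⟨this.2, this.1⟩
  refine ⟨main, fun G => ?_⟩
  rw [main]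
  constructor
  · rintro ⟨S, T, h⟩
    have h1 : (1 : Equiv.Perm Ω) ∈ a.stack.iso S T := h ▸ G.one_mem
    have hST : S = T := by
      have h2 : a.stack.act S 1 = T := h1
      rwa [a.stack.act_one] at h2
    exact ⟨S, hST ▸ h⟩
  · rintro ⟨S, h⟩; exact ⟨S, S, h⟩
end

section
/- If there exists a perfect refiner (with respect to O) for a subset U ⊆ Sym(Ω), then either U is empty, or U is a subgroup of Sym(Ω), or U is a right coset of a subgroup of Sym(Ω). -/
/-- If `U ⊆ Sym Ω` has a perfect refiner, then `U` is empty, or a subgroup of `Sym Ω`,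
or a right coset of a subgroup of `Sym Ω`. -/
theorem stmt8 {Ω : Type*} [Fintype Ω] [Nonempty Ω] {O : Type*}
    (a : RAct (Equiv.Perm Ω) O) (U : Set (Equiv.Perm Ω))
    (h : ∃ fL fR : List O → List O, a.IsPerfectRefiner U fL fR) :
    U = ∅ ∨ (∃ H : Subgroup (Equiv.Perm Ω), U = (H : Set (Equiv.Perm Ω))) ∨
      ∃ (H : Subgroup (Equiv.Perm Ω)) (x : Equiv.Perm Ω),
        U = {u : Equiv.Perm Ω | ∃ g ∈ H, u = g * x} := by

  obtain ⟨fL, fR, _, hperf⟩ := h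
  have key : U = a.stack.iso (fL []) (fR []) := by
    have h2 := hperf [] [] rfl
    simp only [List.nil_append] at h2
    rw [← h2]
    ext g
    simp [RAct.iso, RAct.stack]
  rcases Set.eq_empty_or_nonempty U with hU | ⟨g0, hg0⟩
  · exact Or.inl hU
  · right; right
    set X := fL [] with hX
    set Y := fR [] with hY
    have hg0' : a.stack.act X g0 = Y := by
      rw [key] at hg0; exact hg0
    refine ⟨{ carrier := {g | a.stack.act X g = X}
              one_mem' := a.stack.act_one X
              mul_mem' := by
                intro p q hp hq
                simp only [Set.mem_setOf_eq] at *
                rw [a.stack.act_mul, hp, hq]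
              inv_mem' := by
                intro p hp
                simp only [Set.mem_setOf_eq] at *
                rw [← hp, ← a.stack.act_mul, mul_inv_cancel, a.stack.act_one, hp] }, g0, ?_⟩
    ext u
    constructor
    · intro hu
      have hu' : a.stack.act X u = Y := by rw [key] at hu; exact hu
      refine ⟨u * g0⁻¹, ?_, by group⟩
      show a.stack.act X (u * g0⁻¹) = X
      rw [a.stack.act_mul, hu', ← hg0', ← a.stack.act_mul, mul_inv_cancel, a.stack.act_one]
    · rintro ⟨g, hg, rfl⟩
      have hg' : a.stack.act X g = X := hg
      rw [key]
      show a.stack.act X (g * g0) = Y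
      rw [a.stack.act_mul, hg', hg0']
end
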